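/- Consider a heterogeneous game Γ(n,T,x,y,z) with y > 0 and z > 0 (anti-coordination game). For a ∈ [0,1], the constant strategy α* with α*_t = a for all t ∈ T is a symmetric Nash equilibrium if and only if a = ζ. -/

import Mathlib

open Finset

noncomputable def U {T : Type*} [Fintype T] (n : ℕ) (x : T → ℝ) (y z : ℝ)
    (α β : T → ℝ) : ℝ :=
  z * ∑ j, x j * β j +
    ∑ j, (x j / ((n : ℝ) - 1)) *
      (((n : ℝ) - 1) * y + (y + z) * β j - (n : ℝ) * (y + z) * ∑ i, x i * β i) * α j

def IsStrategy {T : Type*} (α : T → ℝ) : Prop :=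
  ∀ t, α t ∈ Set.Icc (0 : ℝ) 1

def IsSymNash {T : Type*} [Fintype T] (n : ℕ) (x : T → ℝ) (y z : ℝ)
    (α : T → ℝ) : Prop :=
  IsStrategy α ∧ ∀ β : T → ℝ, IsStrategy β → U n x y z β α ≤ U n x y z α α

theorem stmt3 {T : Type*} [Fintype T] (hT : 2 ≤ Fintype.card T)
    (n : ℕ) (x : T → ℝ) (hx : ∑ t, x t = 1)
    (hxt : ∀ t : T, 1 < (n : ℝ) * x t ∧ (n : ℝ) * x t < n)
    (y z : ℝ) (hy : 0 < y) (hz : 0 < z) (a : ℝ) (ha : a ∈ Set.Icc (0 : ℝ) 1) :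
    IsSymNash n x y z (fun _ : T => a) ↔ a = y / (y + z) := by
  obtain ⟨ha0, ha1⟩ := ha
  have hne : Nonempty T := Fintype.card_pos_iff.mp (by omega)
  have hcard : (2:ℝ) ≤ (Fintype.card T : ℝ) := by exact_mod_cast hT
  have hcardn : (Fintype.card T : ℝ) < (n : ℝ) := by
    have h1 : ∑ _t : T, (1:ℝ) < ∑ t : T, (n:ℝ) * x t := by
      apply Finset.sum_lt_sum_of_nonempty Finset.univ_nonempty
      intro t _
      exact (hxt t).1
    have h2 : ∑ t : T, (n:ℝ) * x t = (n:ℝ) := by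
      rw [← Finset.mul_sum, hx, mul_one]
    simpa [h2] using h1
  have hn1 : ((n:ℝ) - 1) ≠ 0 := by
    have : (2:ℝ) < (n:ℝ) := lt_of_le_of_lt hcard hcardn
    intro h; linarith
  have hyz : y + z ≠ 0 := by positivity
  have key : ∀ β : T → ℝ, U n x y z β (fun _ => a)
      = z * a + (y - (y + z) * a) * ∑ j, x j * β j := by
    intro β
    have hsum : (∑ i, x i * a) = a := by rw [← Finset.sum_mul, hx, one_mul]
    show z * ∑ j, x j * a +
      ∑ j, (x j / ((n : ℝ) - 1)) *
        (((n : ℝ) - 1) * y + (y + z) * a - (n : ℝ) * (y + z) * ∑ i, x i * a) * β j = _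
    rw [hsum]
    congr 1
    rw [Finset.mul_sum]
    apply Finset.sum_congr rfl
    intro j _
    field_simp
    ring
  constructor
  · rintro ⟨_, hNash⟩
    have h1 := hNash (fun _ => 1) (fun t => ⟨zero_le_one, le_refl 1⟩)
    have h0 := hNash (fun _ => 0) (fun t => ⟨le_refl 0, zero_le_one⟩)
    rw [key, key] at h1 h0
    have s1 : ∑ j : T, x j * (1:ℝ) = 1 := by simpa using hx
    have s0 : ∑ j : T, x j * (0:ℝ) = 0 := by simp
    have sa : ∑ j : T, x j * a = a := by rw [← Finset.sum_mul, hx, one_mul]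
    rw [s1, sa] at h1
    rw [s0, sa] at h0
    -- h1 : z*a + c*1 ≤ z*a + c*a ; h0 : z*a + c*0 ≤ z*a + c*a
    have hc0 : y - (y + z) * a = 0 := by
      rcases lt_trichotomy (y - (y + z) * a) 0 with h | h | h
      · exfalso
        have haz : a ≤ 0 := by nlinarith
        have : a = 0 := le_antisymm haz ha0
        rw [this] at h
        simp at h
        linarith
      · exact h
      · exfalso
        have ha1' : 1 ≤ a := by nlinarith
        have : a = 1 := le_antisymm ha1 ha1'
        rw [this] at h
        simp at h
        linarith
    rw [eq_div_iff hyz]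
    linarith
  · intro heq
    refine ⟨fun t => ⟨ha0, ha1⟩, fun β hβ => ?_⟩
    rw [key, key]
    have hc : y - (y + z) * a = 0 := by
      rw [heq]
      field_simp
      ring
    rw [hc]
    simp
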